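/- Let H be an inner product space over ℂ, n ≥ 1, x₁,…,xₙ ∈ H, a ∈ H, r ≥ 0 with ‖xₖ − a‖ ≤ r for all k. Then ‖∑ₖ k·xₖ − ((n+1)/2)·∑ₖ xₖ‖ ≤ (rn/2)·((n−1)(n+1)/3)^{1/2}. -/

import Mathlib

open Finset

lemma sum_Icc_id_real (n : ℕ) : ∑ k ∈ Icc 1 n, (k:ℝ) = n*(n+1)/2 := by
  induction n with
  | zero => simp
  | succ m ih =>
    rw [Finset.sum_Icc_succ_top (by omega), ih]
    push_cast; ring

lemma sum_Icc_sq_real (n : ℕ) : ∑ k ∈ Icc 1 n, (k:ℝ)^2 = n*(n+1)*(2*n+1)/6 := by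
  induction n with
  | zero => simp
  | succ m ih =>
    rw [Finset.sum_Icc_succ_top (by omega), ih]
    push_cast; ring

lemma sum_Icc_id_complex (n : ℕ) : ∑ k ∈ Icc 1 n, (k:ℂ) = n*(n+1)/2 := by
  induction n with
  | zero => simp
  | succ m ih =>
    rw [Finset.sum_Icc_succ_top (by omega), ih]
    push_cast; ring

theorem mellin_moment_one_approx {H : Type*} [NormedAddCommGroup H] [InnerProductSpace ℂ H]
    (n : ℕ) (hn : 1 ≤ n) (x : ℕ → H) (a : H) (r : ℝ) (hr : 0 ≤ r)
    (hx : ∀ k ∈ Finset.Icc 1 n, ‖x k - a‖ ≤ r) :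
    ‖∑ k ∈ Finset.Icc 1 n, (k : ℂ) • x k
        - ((((n : ℂ) + 1) / 2)) • ∑ k ∈ Finset.Icc 1 n, x k‖
      ≤ r * (n : ℝ) / 2 * Real.sqrt (((n : ℝ) - 1) * ((n : ℝ) + 1) / 3) := by
  set c : ℕ → ℂ := fun k => (k:ℂ) - ((n:ℂ)+1)/2 with hc
  set d : ℕ → ℝ := fun k => (k:ℝ) - ((n:ℝ)+1)/2 with hd
  have hc0 : ∑ k ∈ Icc 1 n, c k = 0 := by
    simp only [hc]
    rw [Finset.sum_sub_distrib, Finset.sum_const, Nat.card_Icc, sum_Icc_id_complex,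
      nsmul_eq_mul]
    push_cast [Nat.add_sub_cancel]
    ring
  have key : ∑ k ∈ Finset.Icc 1 n, (k : ℂ) • x k
        - ((((n : ℂ) + 1) / 2)) • ∑ k ∈ Finset.Icc 1 n, x k
      = ∑ k ∈ Icc 1 n, c k • (x k - a) := by
    have : ∑ k ∈ Icc 1 n, c k • (x k - a)
        = ∑ k ∈ Icc 1 n, c k • x k - (∑ k ∈ Icc 1 n, c k) • a := by
      rw [Finset.sum_smul, ← Finset.sum_sub_distrib]
      simp [smul_sub]
    rw [this, hc0, zero_smul, sub_zero, Finset.smul_sum, ← Finset.sum_sub_distrib]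
    congr 1; ext k
    simp [hc, sub_smul]
  rw [key]
  have hnorm : ∀ k : ℕ, ‖c k‖ = |d k| := by
    intro k
    have : c k = ((d k : ℝ) : ℂ) := by push_cast [hc, hd]; ring
    rw [this, Complex.norm_real, Real.norm_eq_abs]
  have step1 : ‖∑ k ∈ Icc 1 n, c k • (x k - a)‖ ≤ r * ∑ k ∈ Icc 1 n, |d k| := by
    calc ‖∑ k ∈ Icc 1 n, c k • (x k - a)‖
        ≤ ∑ k ∈ Icc 1 n, ‖c k • (x k - a)‖ := norm_sum_le _ _
      _ ≤ ∑ k ∈ Icc 1 n, |d k| * r := by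
          apply Finset.sum_le_sum
          intro k hk
          rw [norm_smul, hnorm]
          exact mul_le_mul_of_nonneg_left (hx k hk) (abs_nonneg _)
      _ = r * ∑ k ∈ Icc 1 n, |d k| := by rw [← Finset.sum_mul]; ring
  have hS : ∑ k ∈ Icc 1 n, (d k)^2 = n*(n+1)*(n-1)/12 := by
    have expand : ∀ k:ℕ, (d k)^2 = (k:ℝ)^2 - ((n:ℝ)+1)*(k:ℝ) + (((n:ℝ)+1)/2)^2 := by
      intro k; simp only [hd]; ring
    simp only [expand]
    rw [Finset.sum_add_distrib, Finset.sum_sub_distrib, sum_Icc_sq_real, ← Finset.mul_sum,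
      sum_Icc_id_real, Finset.sum_const, Nat.card_Icc, nsmul_eq_mul]
    push_cast [Nat.add_sub_cancel]
    ring
  have hCS : (∑ k ∈ Icc 1 n, |d k|)^2 ≤ (n:ℝ) * ∑ k ∈ Icc 1 n, (d k)^2 := by
    have := sq_sum_le_card_mul_sum_sq (s := Icc 1 n) (f := fun k => |d k|)
    simpa [Nat.card_Icc, sq_abs, Nat.add_sub_cancel] using this
  have hsum_le : ∑ k ∈ Icc 1 n, |d k| ≤ Real.sqrt ((n:ℝ) * ((n:ℝ)*((n:ℝ)+1)*((n:ℝ)-1)/12)) := by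
    rw [show ((n:ℝ) * ((n:ℝ)*((n:ℝ)+1)*((n:ℝ)-1)/12)) = (n:ℝ) * ∑ k ∈ Icc 1 n, (d k)^2 by rw [hS]]
    have h0 : (0:ℝ) ≤ ∑ k ∈ Icc 1 n, |d k| := Finset.sum_nonneg fun k _ => abs_nonneg _
    calc ∑ k ∈ Icc 1 n, |d k| = Real.sqrt ((∑ k ∈ Icc 1 n, |d k|)^2) := (Real.sqrt_sq h0).symm
      _ ≤ _ := Real.sqrt_le_sqrt hCS
  have hsqrt : Real.sqrt ((n:ℝ) * ((n:ℝ)*((n:ℝ)+1)*((n:ℝ)-1)/12))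
      = (n:ℝ)/2 * Real.sqrt (((n : ℝ) - 1) * ((n : ℝ) + 1) / 3) := by
    have h1 : ((n:ℝ) * ((n:ℝ)*((n:ℝ)+1)*((n:ℝ)-1)/12))
        = ((n:ℝ)/2)^2 * ((((n : ℝ) - 1) * ((n : ℝ) + 1) / 3)) := by ring
    rw [h1, Real.sqrt_mul (by positivity), Real.sqrt_sq (by positivity)]
  calc ‖∑ k ∈ Icc 1 n, c k • (x k - a)‖ ≤ r * ∑ k ∈ Icc 1 n, |d k| := step1
    _ ≤ r * ((n:ℝ)/2 * Real.sqrt (((n : ℝ) - 1) * ((n : ℝ) + 1) / 3)) := by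
        rw [← hsqrt]; exact mul_le_mul_of_nonneg_left hsum_le hr
    _ = r * (n : ℝ) / 2 * Real.sqrt (((n : ℝ) - 1) * ((n : ℝ) + 1) / 3) := by ring
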